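/- Let p > 1 and d(0) > 0, and define d(c) = d(0)(1-c²)^{(p+3)/(2(p-1))} for c² < 1. Then d''(c) = 4 d(0) (p+3)/(p-1)² · (1-c²)^{(7-3p)/(2(p-1))} · (c² - (p-1)/4). In particular, d is strictly convex on the set { c : (p-1)/4 < c² < 1 } when 1 < p < 5. -/

import Mathlib

theorem boussinesq_d_second_derivative (p d0 : ℝ) (hp : 1 < p) (hd0 : 0 < d0)
    (d : ℝ → ℝ)
    (hd : d = fun c : ℝ => d0 * (1 - c ^ 2) ^ ((p + 3) / (2 * (p - 1)))) :
    (∀ c : ℝ, c ^ 2 < 1 →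
      deriv (deriv d) c =
        4 * d0 * ((p + 3) / (p - 1) ^ 2) * (1 - c ^ 2) ^ ((7 - 3 * p) / (2 * (p - 1))) *
          (c ^ 2 - (p - 1) / 4)) ∧
    (p < 5 → ∀ c : ℝ, (p - 1) / 4 < c ^ 2 → c ^ 2 < 1 → 0 < deriv (deriv d) c) := by
  subst hd
  have hp1 : p - 1 ≠ 0 := by linarith
  set α := (p + 3) / (2 * (p - 1)) with hα
  set β := (7 - 3 * p) / (2 * (p - 1)) with hβ
  have hβ2 : β = α - 1 - 1 := by
    rw [hβ, hα]; field_simp; ring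
  have hopen : IsOpen {x : ℝ | x ^ 2 < 1} :=
    isOpen_lt (by continuity) continuous_const
  have hder1 : ∀ c : ℝ, c ^ 2 < 1 →
      HasDerivAt (fun c : ℝ => d0 * (1 - c ^ 2) ^ α)
        ((d0 * α) * ((1 - c ^ 2) ^ (α - 1) * (-2 * c))) c := by
    intro c hc
    have h1 : HasDerivAt (fun c : ℝ => 1 - c ^ 2) (-(2 * c)) c := by
      simpa using (hasDerivAt_pow 2 c).const_sub 1
    have hpos : (0:ℝ) < 1 - c ^ 2 := by nlinarith
    have h2 := h1.rpow_const (p := α) (Or.inl (ne_of_gt hpos))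
    have h3 := h2.const_mul d0
    exact h3.congr_deriv (by ring)
  have hderiv1 : ∀ c ∈ {x : ℝ | x ^ 2 < 1},
      deriv (fun c : ℝ => d0 * (1 - c ^ 2) ^ α) c
        = (d0 * α) * ((1 - c ^ 2) ^ (α - 1) * (-2 * c)) := fun c hc => (hder1 c hc).deriv
  have key : ∀ c : ℝ, c ^ 2 < 1 →
      deriv (deriv (fun c : ℝ => d0 * (1 - c ^ 2) ^ α)) c =
        4 * d0 * ((p + 3) / (p - 1) ^ 2) * (1 - c ^ 2) ^ β * (c ^ 2 - (p - 1) / 4) := by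
    intro c hc
    have hmem : {x : ℝ | x ^ 2 < 1} ∈ nhds c := hopen.mem_nhds hc
    have heq : deriv (fun c : ℝ => d0 * (1 - c ^ 2) ^ α)
        =ᶠ[nhds c] fun c => (d0 * α) * ((1 - c ^ 2) ^ (α - 1) * (-2 * c)) :=
      Filter.eventuallyEq_of_mem hmem hderiv1
    rw [heq.deriv_eq]
    have h1 : HasDerivAt (fun c : ℝ => 1 - c ^ 2) (-(2 * c)) c := by
      simpa using (hasDerivAt_pow 2 c).const_sub 1
    have hpos : (0:ℝ) < 1 - c ^ 2 := by nlinarith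
    have h2 := h1.rpow_const (p := α - 1) (Or.inl (ne_of_gt hpos))
    have h4 : HasDerivAt (fun c : ℝ => -2 * c) (-2) c := by
      simpa using (hasDerivAt_id c).const_mul (-2 : ℝ)
    have h3 := h2.mul h4
    have h5 : deriv (fun c : ℝ => d0 * α * ((1 - c ^ 2) ^ (α - 1) * (-2 * c))) c = _ :=
      (h3.const_mul (d0 * α)).deriv
    rw [h5]
    have hrw : (1 - c ^ 2) ^ (α - 1) = (1 - c ^ 2) ^ (α - 1 - 1) * (1 - c ^ 2) := by
      rw [← Real.rpow_add_one (ne_of_gt hpos)]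
      ring_nf
    rw [hrw, hβ2]
    generalize (1 - c ^ 2) ^ (α - 1 - 1) = t
    rw [hα]
    field_simp
    ring
  refine ⟨key, ?_⟩
  intro _ c hc1 hc2
  rw [key c hc2]
  have hpos : (0:ℝ) < 1 - c ^ 2 := by nlinarith
  have ht := Real.rpow_pos_of_pos hpos β
  have hp3 : 0 < (p + 3) / (p - 1) ^ 2 := by positivity
  have hc3 : 0 < c ^ 2 - (p - 1) / 4 := by linarith
  positivity
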